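/- The complex number b_0 = (i k_0^3 σ''(0)^2 / (2 ω_c)) / D + i σ'''(0) k_0^2/(4 ω_c), with D = −2σ'(0)k_0 + (2iω_c − 4δ_c k_0^2 + 16 k_0^4)(−iω_c k_0^{−1} − 8 a_c k_0^3), has real part Re b_0 = −6 k_0^6 σ''(0)^2 δ_c / α, where α = (−2σ'(0)k_0^2 + 2ω_c^2 − 32 k_0^8 a_c(3 − a_c))^2 + 144 k_0^4 ω_c^2 δ_c^2, provided δ_c = (a_c+1)k_0^2 and ω_c^2 = σ'(0)k_0^2 − a_c^2 k_0^8 > 0. -/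

import Mathlib

open Complex


lemma aux_re (r s w a b : ℝ) (hw : w ≠ 0) (hab : a ^ 2 + b ^ 2 ≠ 0) :
    ((I * (r : ℂ) / (2 * (w : ℂ))) / ((a : ℝ) + (b : ℝ) * I) +
      I * (s : ℂ) / (4 * (w : ℂ))).re = r * b / (2 * w * (a ^ 2 + b ^ 2)) := by
  have hab' : ((a : ℝ) : ℂ) + (b : ℝ) * I ≠ 0 := by
    simp only [ne_eq, Complex.ext_iff, Complex.add_re, Complex.add_im, Complex.mul_re,
      Complex.mul_im, Complex.ofReal_re, Complex.ofReal_im, Complex.I_re, Complex.I_im,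
      Complex.zero_re, Complex.zero_im]
    intro h
    apply hab
    nlinarith [h.1, h.2]
  simp only [Complex.div_re, Complex.div_im, Complex.add_re, Complex.add_im, Complex.mul_re,
    Complex.mul_im, Complex.normSq_apply, Complex.ofReal_re, Complex.ofReal_im,
    Complex.I_re, Complex.I_im]
  have hpos : 0 < a ^ 2 + b ^ 2 := lt_of_le_of_ne (by positivity) (Ne.symm hab)
  have hw2 : 0 < w ^ 2 := by positivity
  have h4 : w ^ 2 * b ^ 2 * 4 + w ^ 2 * a ^ 2 * 4 ≠ 0 := by nlinarith
  field_simp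
  have h5 : 0 < a * a + b * b := by nlinarith
  have e : (a + 0 * (b - 1)) ^ 2 + (0 + (b + 0 ^ 2)) ^ 2 = a ^ 2 + b ^ 2 := by ring
  rw [e]
  simp only [Complex.re_ofNat, Complex.im_ofNat]
  field_simp
  ring


/-- The cubic self-coupling coefficient
`b_0 = (i k_0^3 σ''(0)^2/(2ω_c))/D + i σ'''(0) k_0^2/(4ω_c)` has real part
`−6 k_0^6 σ''(0)^2 δ_c / α` with
`α = (−2σ'(0)k_0^2 + 2ω_c^2 − 32 k_0^8 a_c(3 − a_c))^2 + 144 k_0^4 ω_c^2 δ_c^2`,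
provided `δ_c = (a_c+1)k_0^2` and `ω_c^2 = σ'(0)k_0^2 − a_c^2 k_0^8 > 0`. -/
theorem real_part_b0 (ac δc σ1 σ2 σ3 k0 ωc : ℝ) (hk : k0 ≠ 0)
    (hδ : δc = (ac + 1) * k0 ^ 2) (hω : ωc ^ 2 = σ1 * k0 ^ 2 - ac ^ 2 * k0 ^ 8)
    (hωpos : 0 < ωc)
    (hD : (-2 * σ1 * k0 : ℂ) + (2 * I * ωc - 4 * δc * k0 ^ 2 + 16 * k0 ^ 4) *
      (-(I * ωc) * (k0 : ℂ)⁻¹ - 8 * ac * k0 ^ 3) ≠ 0)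
    (hα : 0 < (-2 * σ1 * k0 ^ 2 + 2 * ωc ^ 2 - 32 * k0 ^ 8 * ac * (3 - ac)) ^ 2 +
      144 * k0 ^ 4 * ωc ^ 2 * δc ^ 2) :
    ((I * (k0 ^ 3 * σ2 ^ 2 : ℝ) / (2 * (ωc : ℂ))) /
        ((-2 * σ1 * k0 : ℂ) + (2 * I * ωc - 4 * δc * k0 ^ 2 + 16 * k0 ^ 4) *
          (-(I * ωc) * (k0 : ℂ)⁻¹ - 8 * ac * k0 ^ 3)) +
      I * (σ3 * k0 ^ 2 : ℝ) / (4 * (ωc : ℂ))).re =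
    -6 * k0 ^ 6 * σ2 ^ 2 * δc /
      ((-2 * σ1 * k0 ^ 2 + 2 * ωc ^ 2 - 32 * k0 ^ 8 * ac * (3 - ac)) ^ 2 +
        144 * k0 ^ 4 * ωc ^ 2 * δc ^ 2) := by
  have hk' : (k0 : ℂ) ≠ 0 := by exact_mod_cast hk
  have hωne : ωc ≠ 0 := ne_of_gt hωpos
  have hden : ((-2 * σ1 * k0 : ℂ) + (2 * I * ωc - 4 * δc * k0 ^ 2 + 16 * k0 ^ 4) *
      (-(I * ωc) * (k0 : ℂ)⁻¹ - 8 * ac * k0 ^ 3)) =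
      (((-2 * σ1 * k0 ^ 2 + 2 * ωc ^ 2 - 32 * k0 ^ 8 * ac * (3 - ac)) / k0 : ℝ) : ℂ) +
      ((-12 * ωc * δc * k0 : ℝ) : ℂ) * I := by
    subst hδ
    push_cast
    field_simp
    ring_nf
    simp [Complex.ext_iff]
  have hns : ((-2 * σ1 * k0 ^ 2 + 2 * ωc ^ 2 - 32 * k0 ^ 8 * ac * (3 - ac)) / k0) ^ 2 +
      (-12 * ωc * δc * k0) ^ 2 ≠ 0 := by
    have h2 : ((-2 * σ1 * k0 ^ 2 + 2 * ωc ^ 2 - 32 * k0 ^ 8 * ac * (3 - ac)) / k0) ^ 2 +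
        (-12 * ωc * δc * k0) ^ 2 =
        ((-2 * σ1 * k0 ^ 2 + 2 * ωc ^ 2 - 32 * k0 ^ 8 * ac * (3 - ac)) ^ 2 +
          144 * k0 ^ 4 * ωc ^ 2 * δc ^ 2) / k0 ^ 2 := by
      field_simp; ring
    rw [h2]
    positivity
  rw [hden, aux_re _ _ _ _ _ hωne hns]
  rw [div_eq_div_iff (by positivity) (ne_of_gt hα)]
  field_simp
  ring
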